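/- arXiv:1407.3993 — 2 statements merged into one kernel-verified Lean document; each statement's English description precedes it below -/
import Mathlib

section
/- Let μ₊ and μ₋ be Conley–Zehnder iteration sequences with μ₊(1) − μ₋(1) = 1, and suppose at least one of μ₊, μ₋ is of hyperbolic type. Then for every integer k ≥ 1 one has μ₊(k) − μ₋(k) ≥ 1. (Numeric content of the second case of the paper's proposition on covers of cylinders: a k-fold cover of an index-1 cylinder, one of whose asymptotic orbits is hyperbolic, has Fredholm index at least 1.) -/
/-- A Conley–Zehnder iteration sequence of elliptic type: there is a
non-integer real rotation angle `θ` with `μ k = 2⌊kθ⌋ + 1` for all `k ≥ 1`. -/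
def IsEllipticCZSeq (μ : ℕ → ℤ) : Prop :=
  ∃ θ : ℝ, (∀ n : ℤ, θ ≠ (n : ℝ)) ∧ ∀ k : ℕ, 1 ≤ k → μ k = 2 * ⌊(k : ℝ) * θ⌋ + 1

/-- A Conley–Zehnder iteration sequence of hyperbolic type: there is an
integer `r` with `μ k = k·r` for all `k ≥ 1`. -/
def IsHyperbolicCZSeq (μ : ℕ → ℤ) : Prop :=
  ∃ r : ℤ, ∀ k : ℕ, 1 ≤ k → μ k = (k : ℤ) * r

/-- A Conley–Zehnder iteration sequence: either elliptic or hyperbolic type. -/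
def IsCZSeq (μ : ℕ → ℤ) : Prop :=
  IsEllipticCZSeq μ ∨ IsHyperbolicCZSeq μ

lemma floor_mul_lb (θ : ℝ) (k : ℕ) : (k : ℤ) * ⌊θ⌋ ≤ ⌊(k : ℝ) * θ⌋ := by
  apply Int.le_floor.mpr
  push_cast
  have := Int.floor_le θ
  have : (0:ℝ) ≤ (k:ℝ) := by positivity
  nlinarith [Int.floor_le θ]

lemma floor_mul_ub (θ : ℝ) (k : ℕ) (hk : 1 ≤ k) :
    ⌊(k : ℝ) * θ⌋ ≤ (k : ℤ) * ⌊θ⌋ + (k : ℤ) - 1 := by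
  have h1 : ⌊(k : ℝ) * θ⌋ < (k : ℤ) * (⌊θ⌋ + 1) := by
    apply Int.floor_lt.mpr
    push_cast
    have hθ : θ < (⌊θ⌋ : ℝ) + 1 := Int.lt_floor_add_one θ
    have hkpos : (1:ℝ) ≤ (k:ℝ) := by exact_mod_cast hk
    nlinarith
  have h2 : (k:ℤ) * (⌊θ⌋ + 1) = (k:ℤ) * ⌊θ⌋ + (k:ℤ) := by ring
  omega

/-- If μ₊(1) − μ₋(1) = 1 and at least one of μ₊, μ₋ is of hyperbolic type,
then μ₊(k) − μ₋(k) ≥ 1 for every k ≥ 1. -/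
theorem cz_index_one_hyperbolic_iterates (μpos μneg : ℕ → ℤ)
    (hpos : IsCZSeq μpos) (hneg : IsCZSeq μneg)
    (h : μpos 1 - μneg 1 = 1)
    (hhyp : IsHyperbolicCZSeq μpos ∨ IsHyperbolicCZSeq μneg)
    (k : ℕ) (hk : 1 ≤ k) :
    μpos k - μneg k ≥ 1 := by
  rcases hhyp with ⟨r, hr⟩ | ⟨r, hr⟩
  · rcases hneg with ⟨θ, hθ, he⟩ | ⟨s, hs⟩
    · -- μpos hyperbolic, μneg elliptic
      have h1 : r - (2 * ⌊θ⌋ + 1) = 1 := by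
        have a := hr 1 le_rfl; have b := he 1 le_rfl
        norm_num at a b; omega
      have hub := floor_mul_ub θ k hk
      have := hr k hk; have := he k hk
      have : (1:ℝ) * θ = θ := one_mul θ
      have hr' : r = 2 * ⌊θ⌋ + 2 := by omega
      have hk' : (1:ℤ) ≤ (k:ℤ) := by exact_mod_cast hk
      have := hr k hk; have := he k hk
      rw [hr k hk, he k hk, hr']
      nlinarith [hub]
    · -- both hyperbolic
      have h1 : r - s = 1 := by
        have := hr 1 le_rfl; have := hs 1 le_rfl; simp at *; omega
      rw [hr k hk, hs k hk]
      have hk' : (1:ℤ) ≤ (k:ℤ) := by exact_mod_cast hk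
      nlinarith
  · rcases hpos with ⟨θ, hθ, he⟩ | ⟨s, hs⟩
    · -- μpos elliptic, μneg hyperbolic
      have h1 : (2 * ⌊θ⌋ + 1) - r = 1 := by
        have a := hr 1 le_rfl; have b := he 1 le_rfl
        norm_num at a b; omega
      have hr' : r = 2 * ⌊θ⌋ := by omega
      have hlb := floor_mul_lb θ k
      rw [he k hk, hr k hk, hr']
      nlinarith
    · -- both hyperbolic
      have h1 : s - r = 1 := by
        have := hr 1 le_rfl; have := hs 1 le_rfl; simp at *; omega
      rw [hs k hk, hr k hk]
      have hk' : (1:ℤ) ≤ (k:ℤ) := by exact_mod_cast hk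
      nlinarith
end

section
/- Let μ₊ and μ₋ be Conley–Zehnder iteration sequences with μ₊(1) − μ₋(1) ≥ 2, and let k₁, …, k_n be positive integers with k = k₁ + ⋯ + k_n. Then (n − 1) + μ₊(k) − (μ₋(k₁) + ⋯ + μ₋(k_n)) ≥ 2n. (This is case (i) of the paper's proposition: a genus-zero branched k-fold cover with one positive puncture of a nontrivial cylinder u of index ind(u) ≥ 2, lying in M^J(γ₊^k; γ₋^{k₁},…,γ₋^{k_n}), has Fredholm index at least 2n.) -/
lemma cz_lower (μ : ℕ → ℤ) (h : IsCZSeq μ) (k : ℕ) (hk : 1 ≤ k) :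
    (k : ℤ) * μ 1 - ((k : ℤ) - 1) ≤ μ k := by
  rcases h with ⟨θ, -, hθ⟩ | ⟨r, hr⟩
  · rw [hθ k hk, hθ 1 le_rfl]
    simp only [Nat.cast_one, one_mul]
    have h1 : (k : ℤ) * ⌊θ⌋ ≤ ⌊(k : ℝ) * θ⌋ := by
      rw [Int.le_floor]
      push_cast
      exact mul_le_mul_of_nonneg_left (Int.floor_le θ) (by positivity)
    have h2 : (1 : ℤ) ≤ k := by exact_mod_cast hk
    nlinarith [h1, h2]
  · rw [hr k hk, hr 1 le_rfl]
    simp only [Nat.cast_one, one_mul]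
    have h2 : (1 : ℤ) ≤ k := by exact_mod_cast hk
    nlinarith

lemma cz_upper (μ : ℕ → ℤ) (h : IsCZSeq μ) (k : ℕ) (hk : 1 ≤ k) :
    μ k ≤ (k : ℤ) * μ 1 + ((k : ℤ) - 1) := by
  rcases h with ⟨θ, -, hθ⟩ | ⟨r, hr⟩
  · rw [hθ k hk, hθ 1 le_rfl]
    simp only [Nat.cast_one, one_mul]
    have hkpos : (0 : ℝ) < (k : ℝ) := by exact_mod_cast hk
    have h1 : ⌊(k : ℝ) * θ⌋ < (k : ℤ) * ⌊θ⌋ + k := by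
      rw [Int.floor_lt]
      push_cast
      have := Int.lt_floor_add_one θ
      nlinarith
    have h2 : (1 : ℤ) ≤ k := by exact_mod_cast hk
    nlinarith [h1, h2]
  · rw [hr k hk, hr 1 le_rfl]
    simp only [Nat.cast_one, one_mul]
    have h2 : (1 : ℤ) ≤ k := by exact_mod_cast hk
    nlinarith

/-- Case (i) of the proposition on covers of nontrivial cylinders: if
μ₊(1) − μ₋(1) ≥ 2 and k = k₁ + ⋯ + kₙ with each kᵢ ≥ 1, then
(n − 1) + μ₊(k) − ∑ᵢ μ₋(kᵢ) ≥ 2n. -/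
theorem cz_cover_cylinder_index_ge_two (μpos μneg : ℕ → ℤ)
    (hpos : IsCZSeq μpos) (hneg : IsCZSeq μneg)
    (h : μpos 1 - μneg 1 ≥ 2)
    (n : ℕ) (hn : 1 ≤ n) (K : Fin n → ℕ) (hK : ∀ i, 1 ≤ K i)
    (k : ℕ) (hk : k = ∑ i, K i) :
    ((n : ℤ) - 1) + μpos k - ∑ i, μneg (K i) ≥ 2 * n := by
  have hkn : n ≤ k := by
    rw [hk]
    calc n = ∑ _i : Fin n, 1 := by simp
    _ ≤ ∑ i, K i := Finset.sum_le_sum fun i _ => hK i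
  have hk1 : 1 ≤ k := le_trans hn hkn
  have hsum : ∑ i, μneg (K i) ≤ (k : ℤ) * μneg 1 + ((k : ℤ) - n) := by
    calc ∑ i, μneg (K i) ≤ ∑ i, ((K i : ℤ) * μneg 1 + ((K i : ℤ) - 1)) :=
          Finset.sum_le_sum fun i _ => cz_upper μneg hneg (K i) (hK i)
    _ = (k : ℤ) * μneg 1 + ((k : ℤ) - n) := by
        rw [Finset.sum_add_distrib, ← Finset.sum_mul, Finset.sum_sub_distrib]
        have : ((k : ℕ) : ℤ) = ∑ i, (K i : ℤ) := by rw [hk]; push_cast; rfl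
        simp [← this]
  have hlow := cz_lower μpos hpos k hk1
  have hknZ : (n : ℤ) ≤ (k : ℤ) := by exact_mod_cast hkn
  have hprod : (k : ℤ) * 2 ≤ (k : ℤ) * (μpos 1 - μneg 1) :=
    mul_le_mul_of_nonneg_left h (by positivity)
  nlinarith [hsum, hlow, hknZ, hprod]
end
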